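/- arXiv:2110.07894 — 3 statements merged into one kernel-verified Lean document; each statement's English description precedes it below -/
import Mathlib

section
/- Let L be a real symmetric positive semidefinite n×n matrix, q > 0, y ∈ ℝⁿ, K⁻¹ = (1/q)(qI + L), and let x̄ be a square-integrable random vector in ℝⁿ with tr(Var(K⁻¹x̄)) > 0 and α* := tr(Cov(K⁻¹x̄, x̄))/tr(Var(K⁻¹x̄)) > 0. Then for every α with 0 < α < 2α*, the estimator z̄(α) = x̄ − α(K⁻¹x̄ − y) has strictly smaller variance than x̄: tr(Var(z̄(α))) < tr(Var(x̄)). -/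
open MeasureTheory Matrix RealInnerProductSpace

private lemma integrable_inner_aux {Ω : Type} [MeasurableSpace Ω] {μ : Measure Ω}
    {E : Type*} [NormedAddCommGroup E] [InnerProductSpace ℝ E]
    {f g : Ω → E} (hf : MemLp f 2 μ) (hg : MemLp g 2 μ) :
    Integrable (fun ω => ⟪f ω, g ω⟫) μ := by
  have h := L2.integrable_inner (𝕜 := ℝ) (hf.toLp f) (hg.toLp g)
  refine h.congr ?_
  filter_upwards [hf.coeFn_toLp, hg.coeFn_toLp] with ω h1 h2
  rw [h1, h2]

/-- If 0 < α < 2α*, the corrected estimator z̄(α) has strictly smaller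
variance than x̄. -/
theorem stmt_4 {n : ℕ} (L : Matrix (Fin n) (Fin n) ℝ) (hL : L.PosSemidef)
    (q : ℝ) (hq : 0 < q) (y : EuclideanSpace ℝ (Fin n))
    (Kinv : Matrix (Fin n) (Fin n) ℝ)
    (hKinv : Kinv = (1 / q) • (q • (1 : Matrix (Fin n) (Fin n) ℝ) + L))
    {Ω : Type} [MeasurableSpace Ω] (μ : Measure Ω) [IsProbabilityMeasure μ]
    (xbar : Ω → EuclideanSpace ℝ (Fin n)) (hx : MemLp xbar 2 μ)
    (m : EuclideanSpace ℝ (Fin n)) (hm : m = ∫ ω, xbar ω ∂μ)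
    (b : ℝ) (hb : b = ∫ ω, ‖Matrix.toEuclideanLin Kinv (xbar ω - m)‖ ^ 2 ∂μ)
    (hbpos : 0 < b)
    (c : ℝ) (hc : c = ∫ ω, ⟪Matrix.toEuclideanLin Kinv (xbar ω - m), xbar ω - m⟫ ∂μ)
    (αstar : ℝ) (hαstar : αstar = c / b) (hαstarpos : 0 < αstar)
    (zbar : ℝ → Ω → EuclideanSpace ℝ (Fin n))
    (hzbar : zbar = fun α ω => xbar ω - α • (Matrix.toEuclideanLin Kinv (xbar ω) - y))
    (V : ℝ → ℝ)
    (hV : V = fun α => ∫ ω, ‖zbar α ω - ∫ ω', zbar α ω' ∂μ‖ ^ 2 ∂μ) :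
    ∀ α : ℝ, 0 < α → α < 2 * αstar → V α < ∫ ω, ‖xbar ω - m‖ ^ 2 ∂μ := by
  intro α hα0 hα2
  -- continuous linear map version of Kinv
  set T : EuclideanSpace ℝ (Fin n) →L[ℝ] EuclideanSpace ℝ (Fin n) :=
    (Matrix.toEuclideanLin Kinv).toContinuousLinearMap with hT
  have hTapp : ∀ v, T v = Matrix.toEuclideanLin Kinv v := fun v => rfl
  -- centered process
  set f : Ω → EuclideanSpace ℝ (Fin n) := fun ω => xbar ω - m with hf
  have hfL2 : MemLp f 2 μ := hx.sub (memLp_const m)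
  have hgL2 : MemLp (fun ω => T (f ω)) 2 μ := T.comp_memLp' hfL2
  have hxint : Integrable xbar μ := hx.integrable (by norm_num)
  have hfint : Integrable f μ := hfL2.integrable (by norm_num)
  -- mean of zbar α
  have hmean : (∫ ω', zbar α ω' ∂μ) = m - α • (T m - y) := by
    have h2 : Integrable (fun ω => α • (T (xbar ω) - y)) μ :=
      ((T.integrable_comp hxint).sub (integrable_const y)).smul α
    rw [hzbar]
    simp only [← hTapp]
    rw [integral_sub hxint h2, integral_smul,
      integral_sub (T.integrable_comp hxint) (integrable_const y),
      T.integral_comp_comm hxint, integral_const, probReal_univ,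
      one_smul, ← hm]
  -- the centered zbar
  have hcent : ∀ ω, zbar α ω - (∫ ω', zbar α ω' ∂μ) = f ω - α • T (f ω) := by
    intro ω
    rw [hmean, hzbar]
    simp only [hf, ← hTapp, map_sub, smul_sub]
    abel
  -- pointwise expansion
  have hexp : ∀ ω, ‖f ω - α • T (f ω)‖ ^ 2
      = ‖f ω‖ ^ 2 - (2 * α) * ⟪T (f ω), f ω⟫ + α ^ 2 * ‖T (f ω)‖ ^ 2 := by
    intro ω
    rw [norm_sub_sq_real, real_inner_smul_right, norm_smul, mul_pow]
    rw [real_inner_comm]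
    simp [abs_sq]
    ring
  -- integrability of pieces
  have hint1 : Integrable (fun ω => ‖f ω‖ ^ 2) μ := by
    exact (integrable_inner_aux hfL2 hfL2).congr
      (Filter.Eventually.of_forall fun ω => real_inner_self_eq_norm_sq _)
  have hint2 : Integrable (fun ω => ⟪T (f ω), f ω⟫) μ := integrable_inner_aux hgL2 hfL2
  have hint3 : Integrable (fun ω => ‖T (f ω)‖ ^ 2) μ := by
    exact (integrable_inner_aux hgL2 hgL2).congr
      (Filter.Eventually.of_forall fun ω => real_inner_self_eq_norm_sq _)
  -- compute V α
  have hVα : V α = (∫ ω, ‖f ω‖ ^ 2 ∂μ) - (2 * α) * c + α ^ 2 * b := by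
    rw [hV]
    simp only [hcent, hexp]
    have hI : Integrable (fun ω => ‖f ω‖ ^ 2 - 2 * α * ⟪T (f ω), f ω⟫) μ :=
      hint1.sub (hint2.const_mul _)
    have hI3 : Integrable (fun ω => α ^ 2 * ‖T (f ω)‖ ^ 2) μ := hint3.const_mul _
    rw [integral_add hI hI3, integral_sub hint1 (hint2.const_mul _),
      integral_const_mul, integral_const_mul, hb, hc]
    simp only [hTapp, hf]
  have hA : (∫ ω, ‖xbar ω - m‖ ^ 2 ∂μ) = ∫ ω, ‖f ω‖ ^ 2 ∂μ := rfl
  rw [hVα, hA]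
  have hcb : α * b < 2 * c := by
    have : α < 2 * (c / b) := by rw [← hαstar]; exact hα2
    calc α * b < 2 * (c / b) * b := by exact mul_lt_mul_of_pos_right this hbpos
    _ = 2 * c := by field_simp
  nlinarith
end

section
/- Let G be a finite simple graph on n vertices with graph Laplacian L = D − W (D the diagonal degree matrix, W the adjacency matrix), let d_max be the maximum degree of G, and let q > 0. Set K⁻¹ = (1/q)(qI + L) and α = 2q/(q + 2·d_max). Then for all vectors v ∈ ℝⁿ, ‖(I − αK⁻¹)v‖₂ ≤ ‖v‖₂. In particular, for any x̄, x̂ ∈ ℝⁿ and y ∈ ℝⁿ with x̂ = q(qI + L)⁻¹y and z̄ = x̄ − α(K⁻¹x̄ − y), one has ‖z̄ − x̂‖₂ ≤ ‖x̄ − x̂‖₂. -/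
open MeasureTheory Matrix


-- quadratic form bound for the Laplacian
lemma lap_quad_bound' {n : ℕ} (G : SimpleGraph (Fin n)) [DecidableRel G.Adj]
    (x : Fin n → ℝ) :
    x ⬝ᵥ (G.lapMatrix ℝ *ᵥ x) ≤
      2 * ((Finset.univ.sup fun v => G.degree v : ℕ) : ℝ) * (x ⬝ᵥ x) := by
  set d : ℝ := ((Finset.univ.sup fun v => G.degree v : ℕ) : ℝ) with hd
  have hdeg : ∀ i : Fin n, (G.degree i : ℝ) ≤ d := by
    intro i
    have h := Finset.le_sup (f := fun v => G.degree v) (Finset.mem_univ i)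
    exact_mod_cast Nat.cast_le.mpr h
  have hrow : ∀ (i : Fin n) (c : ℝ), (∑ j, if G.Adj i j then c else 0) = (G.degree i : ℝ) * c := by
    intro i c
    rw [G.degree_eq_sum_if_adj (R := ℝ) i, Finset.sum_mul]
    simp [ite_mul]
  rw [← Matrix.toLinearMap₂'_apply', SimpleGraph.lapMatrix_toLinearMap₂']
  have step1 : (∑ i, ∑ j, if G.Adj i j then (x i - x j)^2 else 0)
      ≤ ∑ i, ∑ j, if G.Adj i j then 2*(x i)^2 + 2*(x j)^2 else 0 := by
    apply Finset.sum_le_sum; intro i _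
    apply Finset.sum_le_sum; intro j _
    split
    · nlinarith [sq_nonneg (x i + x j)]
    · exact le_refl 0
  have step2 : (∑ i, ∑ j, if G.Adj i j then 2*(x i)^2 + 2*(x j)^2 else 0)
      = (∑ i, ∑ j, if G.Adj i j then 2*(x i)^2 else 0)
        + ∑ i, ∑ j, if G.Adj i j then 2*(x j)^2 else 0 := by
    rw [← Finset.sum_add_distrib]
    congr 1 with i
    rw [← Finset.sum_add_distrib]
    congr 1 with j
    split <;> ring
  have step3 : (∑ i, ∑ j, if G.Adj i j then (2*(x j)^2 : ℝ) else 0)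
      = ∑ i, ∑ j, if G.Adj i j then 2*(x i)^2 else 0 := by
    rw [Finset.sum_comm]
    congr 1 with i
    congr 1 with j
    rw [if_congr (G.adj_comm i j) rfl rfl]
  have step4 : (∑ i, ∑ j, if G.Adj i j then (2*(x i)^2 : ℝ) else 0)
      ≤ 2 * d * (x ⬝ᵥ x) := by
    have : ∀ i : Fin n, (∑ j, if G.Adj i j then (2*(x i)^2 : ℝ) else 0)
        = (G.degree i : ℝ) * (2*(x i)^2) := fun i => hrow i _
    simp_rw [this]
    have hle : ∀ i : Fin n, (G.degree i : ℝ) * (2*(x i)^2) ≤ d * (2*(x i)^2) := by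
      intro i
      exact mul_le_mul_of_nonneg_right (hdeg i) (by positivity)
    calc (∑ i, (G.degree i : ℝ) * (2*(x i)^2)) ≤ ∑ i, d * (2*(x i)^2) :=
          Finset.sum_le_sum fun i _ => hle i
      _ = 2 * d * (x ⬝ᵥ x) := by
          simp only [dotProduct, Finset.mul_sum]
          congr 1 with i
          ring
  calc (∑ i, ∑ j, if G.Adj i j then (x i - x j)^2 else 0) / 2
      ≤ (∑ i, ∑ j, if G.Adj i j then 2*(x i)^2 + 2*(x j)^2 else 0) / 2 := by
        linarith [step1]
    _ = ((∑ i, ∑ j, if G.Adj i j then (2*(x i)^2 : ℝ) else 0)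
          + ∑ i, ∑ j, if G.Adj i j then (2*(x i)^2 : ℝ) else 0) / 2 := by
        rw [step2, step3]
    _ ≤ (2 * d * (x ⬝ᵥ x) + 2 * d * (x ⬝ᵥ x)) / 2 := by linarith [step4]
    _ = 2 * d * (x ⬝ᵥ x) := by ring

noncomputable def Matrix.PosSemidef.sqrt {n : ℕ} {L : Matrix (Fin n) (Fin n) ℝ}
    (_hL : L.PosSemidef) : Matrix (Fin n) (Fin n) ℝ := by
  open scoped MatrixOrder in exact CFC.sqrt L

lemma Matrix.PosSemidef.posSemidef_sqrt {n : ℕ} {L : Matrix (Fin n) (Fin n) ℝ}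
    (hL : L.PosSemidef) : hL.sqrt.PosSemidef := by
  open scoped MatrixOrder in
  exact Matrix.nonneg_iff_posSemidef.mp (CFC.sqrt_nonneg L)

lemma Matrix.PosSemidef.sqrt_mul_self {n : ℕ} {L : Matrix (Fin n) (Fin n) ℝ}
    (hL : L.PosSemidef) : hL.sqrt * hL.sqrt = L := by
  open scoped MatrixOrder in
  exact CFC.sqrt_mul_sqrt_self L (Matrix.nonneg_iff_posSemidef.mpr hL)

lemma sqrt_dot {n : ℕ} {L : Matrix (Fin n) (Fin n) ℝ} (hL : L.PosSemidef)
    (a : Fin n → ℝ) :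
    (hL.sqrt *ᵥ a) ⬝ᵥ (hL.sqrt *ᵥ a) = a ⬝ᵥ (L *ᵥ a) := by
  have hsym : hL.sqrt.transpose = hL.sqrt := by
    have := hL.posSemidef_sqrt.1
    rwa [Matrix.IsHermitian, Matrix.conjTranspose_eq_transpose_of_trivial] at this
  conv_rhs => rw [← hL.sqrt_mul_self, ← Matrix.mulVec_mulVec,
    Matrix.dotProduct_mulVec, ← Matrix.mulVec_transpose, hsym]

-- contraction on raw vectors
lemma contraction_vec {n : ℕ} (G : SimpleGraph (Fin n)) [DecidableRel G.Adj]
    (q : ℝ) (hq : 0 < q) (dmax : ℕ)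
    (hdmax : dmax = Finset.univ.sup fun v => G.degree v)
    (Kinv : Matrix (Fin n) (Fin n) ℝ)
    (hKinv : Kinv = (1 / q) • (q • (1 : Matrix (Fin n) (Fin n) ℝ) + G.lapMatrix ℝ))
    (α : ℝ) (hα : α = 2 * q / (q + 2 * (dmax : ℝ)))
    (x : Fin n → ℝ) :
    (((1 : Matrix (Fin n) (Fin n) ℝ) - α • Kinv) *ᵥ x) ⬝ᵥ
      (((1 : Matrix (Fin n) (Fin n) ℝ) - α • Kinv) *ᵥ x) ≤ x ⬝ᵥ x := by
  set L := G.lapMatrix ℝ with hLdef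
  have hL : L.PosSemidef := SimpleGraph.posSemidef_lapMatrix ℝ G
  set c : ℝ := 2 * (dmax : ℝ) with hc
  have hc0 : 0 ≤ c := by positivity
  have hqc : 0 < q + c := by linarith
  set β : ℝ := α / q with hβ
  have hα0 : 0 < α := by rw [hα]; positivity
  have hβ0 : 0 < β := by rw [hβ]; positivity
  have hsum : α + β * c = 2 := by
    rw [hβ, hα]
    field_simp
  have hB : (1 : Matrix (Fin n) (Fin n) ℝ) - α • Kinv = (1 - α) • 1 - β • L := by
    have h1 : (1:ℝ) / q * q = 1 := by field_simp
    rw [hKinv, smul_add, smul_smul, h1, one_smul]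
    module
  set t : ℝ := x ⬝ᵥ x with htdef
  set s : ℝ := x ⬝ᵥ (L *ᵥ x) with hsdef
  set u : ℝ := (L *ᵥ x) ⬝ᵥ (L *ᵥ x) with hudef
  have ht0 : 0 ≤ t := by
    apply Finset.sum_nonneg
    intro i _
    exact mul_self_nonneg _
  have hs0 : 0 ≤ s := by
    have := hL.dotProduct_mulVec_nonneg x
    simpa using this
  have hst : s ≤ c * t := by
    have := lap_quad_bound' G x
    rw [← hdmax] at this
    simpa [hc] using this
  have hus : u ≤ c * s := by
    have key := lap_quad_bound' G (hL.sqrt *ᵥ x)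
    rw [← hdmax] at key
    have h1 : u = (hL.sqrt *ᵥ x) ⬝ᵥ (L *ᵥ (hL.sqrt *ᵥ x)) := by
      rw [hudef, ← sqrt_dot hL (hL.sqrt *ᵥ x), Matrix.mulVec_mulVec, hL.sqrt_mul_self]
    have h2 : (hL.sqrt *ᵥ x) ⬝ᵥ (hL.sqrt *ᵥ x) = s := sqrt_dot hL x
    rw [h1]
    calc (hL.sqrt *ᵥ x) ⬝ᵥ (L *ᵥ (hL.sqrt *ᵥ x))
        ≤ 2 * (dmax : ℝ) * ((hL.sqrt *ᵥ x) ⬝ᵥ (hL.sqrt *ᵥ x)) := key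
      _ = c * s := by rw [h2, hc]
  have hBx : ((1 : Matrix (Fin n) (Fin n) ℝ) - α • Kinv) *ᵥ x
      = (1 - α) • x - β • (L *ᵥ x) := by
    rw [hB, Matrix.sub_mulVec, Matrix.smul_mulVec, Matrix.smul_mulVec,
      Matrix.one_mulVec]
  have hexp : (((1 : Matrix (Fin n) (Fin n) ℝ) - α • Kinv) *ᵥ x) ⬝ᵥ
      (((1 : Matrix (Fin n) (Fin n) ℝ) - α • Kinv) *ᵥ x)
      = (1-α)^2 * t - 2*(1-α)*β*s + β^2*u := by
    rw [hBx]
    have hcomm : (L *ᵥ x) ⬝ᵥ x = s := by rw [dotProduct_comm]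
    simp only [dotProduct_sub, sub_dotProduct, dotProduct_smul,
      smul_dotProduct, smul_eq_mul, hcomm, ← hsdef, ← htdef, ← hudef]
    ring
  rw [hexp]
  -- arithmetic: (1-α)^2 t - 2(1-α)β s + β² u ≤ t
  have hbc : β * c = 2 - α := by linarith [hsum]
  have h1 : β^2 * u ≤ β * (2 - α) * s := by
    calc β^2 * u ≤ β^2 * (c * s) := mul_le_mul_of_nonneg_left hus (sq_nonneg β)
      _ = β * (β * c) * s := by ring
      _ = β * (2 - α) * s := by rw [hbc]
  have h2 : α * (β * s) ≤ α * ((2 - α) * t) := by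
    apply mul_le_mul_of_nonneg_left _ hα0.le
    calc β * s ≤ β * (c * t) := mul_le_mul_of_nonneg_left hst hβ0.le
      _ = (β * c) * t := by ring
      _ = (2 - α) * t := by rw [hbc]
  nlinarith [h1, h2]

lemma norm_le_of_dot {n : ℕ} (A : Matrix (Fin n) (Fin n) ℝ)
    (h : ∀ x : Fin n → ℝ, (A *ᵥ x) ⬝ᵥ (A *ᵥ x) ≤ x ⬝ᵥ x)
    (v : EuclideanSpace ℝ (Fin n)) :
    ‖Matrix.toEuclideanLin A v‖ ≤ ‖v‖ := by
  rw [EuclideanSpace.norm_eq, EuclideanSpace.norm_eq]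
  apply Real.sqrt_le_sqrt
  have := h ((WithLp.equiv 2 _) v)
  simp only [dotProduct] at this
  simpa [Matrix.toEuclideanLin_apply, Real.norm_eq_abs, sq_abs, pow_two] using this

lemma toEuclideanLin_one' {n : ℕ} (v : EuclideanSpace ℝ (Fin n)) :
    Matrix.toEuclideanLin (1 : Matrix (Fin n) (Fin n) ℝ) v = v := by
  simp [Matrix.toEuclideanLin_apply, Matrix.one_mulVec]

lemma toEuclideanLin_mul' {n : ℕ} (P Q : Matrix (Fin n) (Fin n) ℝ)
    (v : EuclideanSpace ℝ (Fin n)) :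
    Matrix.toEuclideanLin P (Matrix.toEuclideanLin Q v) =
      Matrix.toEuclideanLin (P * Q) v := by
  simp only [Matrix.toEuclideanLin_apply, Matrix.mulVec_mulVec]

/-- For a graph Laplacian, the step size α = 2q/(q + 2 d_max) makes
I − αK⁻¹ a contraction, hence the gradient step does not increase the
distance to the Tikhonov solution. -/
theorem stmt_5 {n : ℕ} (G : SimpleGraph (Fin n)) [DecidableRel G.Adj]
    (q : ℝ) (hq : 0 < q)
    (dmax : ℕ) (hdmax : dmax = Finset.univ.sup fun v => G.degree v)
    (Kinv : Matrix (Fin n) (Fin n) ℝ)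
    (hKinv : Kinv = (1 / q) • (q • (1 : Matrix (Fin n) (Fin n) ℝ) + G.lapMatrix ℝ))
    (α : ℝ) (hα : α = 2 * q / (q + 2 * (dmax : ℝ))) :
    (∀ v : EuclideanSpace ℝ (Fin n),
        ‖Matrix.toEuclideanLin ((1 : Matrix (Fin n) (Fin n) ℝ) - α • Kinv) v‖ ≤ ‖v‖)
    ∧ ∀ xbar xhat y : EuclideanSpace ℝ (Fin n),
        xhat = Matrix.toEuclideanLin
          (q • (q • (1 : Matrix (Fin n) (Fin n) ℝ) + G.lapMatrix ℝ)⁻¹) y →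
        ∀ zbar : EuclideanSpace ℝ (Fin n),
          zbar = xbar - α • (Matrix.toEuclideanLin Kinv xbar - y) →
          ‖zbar - xhat‖ ≤ ‖xbar - xhat‖ := by
  have hcontr : ∀ v : EuclideanSpace ℝ (Fin n),
      ‖Matrix.toEuclideanLin ((1 : Matrix (Fin n) (Fin n) ℝ) - α • Kinv) v‖ ≤ ‖v‖ :=
    fun v => norm_le_of_dot _ (fun x => contraction_vec G q hq dmax hdmax Kinv hKinv α hα x) v
  refine ⟨hcontr, ?_⟩
  intro xbar xhat y hxhat zbar hzbar
  set A := q • (1 : Matrix (Fin n) (Fin n) ℝ) + G.lapMatrix ℝ with hA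
  have hL := SimpleGraph.posSemidef_lapMatrix ℝ G
  have hApd : A.PosDef := by
    rw [Matrix.posDef_iff_dotProduct_mulVec]
    constructor
    · rw [Matrix.IsHermitian, hA, Matrix.conjTranspose_add, Matrix.conjTranspose_smul,
        Matrix.conjTranspose_one, hL.1.eq]
      norm_num
    · intro x hx
      have hs : 0 ≤ x ⬝ᵥ (G.lapMatrix ℝ *ᵥ x) := by simpa using hL.dotProduct_mulVec_nonneg x
      have h0 : 0 ≤ x ⬝ᵥ x := Finset.sum_nonneg fun i _ => mul_self_nonneg _
      have hne : x ⬝ᵥ x ≠ 0 := fun h => hx (dotProduct_self_eq_zero.mp h)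
      have hxx : 0 < x ⬝ᵥ x := lt_of_le_of_ne h0 (Ne.symm hne)
      have hq1 : x ⬝ᵥ (A *ᵥ x) = q * (x ⬝ᵥ x) + x ⬝ᵥ (G.lapMatrix ℝ *ᵥ x) := by
        rw [hA, Matrix.add_mulVec, Matrix.smul_mulVec, Matrix.one_mulVec,
          dotProduct_add, dotProduct_smul, smul_eq_mul]
      simp only [star_trivial]
      rw [hq1]
      nlinarith
  have hdet : IsUnit A.det := (Matrix.isUnit_iff_isUnit_det A).mp hApd.isUnit
  have hAinv : A * A⁻¹ = 1 := Matrix.mul_nonsing_inv A hdet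
  have hKA : Kinv * (q • A⁻¹) = 1 := by
    rw [hKinv, Matrix.smul_mul, Matrix.mul_smul, smul_smul, hAinv]
    rw [one_div, inv_mul_cancel₀ hq.ne', one_smul]
  have hyx : Matrix.toEuclideanLin Kinv xhat = y := by
    rw [hxhat, toEuclideanLin_mul', hKA, toEuclideanLin_one']
  have hm : Matrix.toEuclideanLin ((1 : Matrix (Fin n) (Fin n) ℝ) - α • Kinv) (xbar - xhat)
      = (xbar - xhat) - α • (Matrix.toEuclideanLin Kinv xbar
          - Matrix.toEuclideanLin Kinv xhat) := by
    rw [map_sub (Matrix.toEuclideanLin (𝕜 := ℝ)), _root_.map_smul, LinearMap.sub_apply,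
      LinearMap.smul_apply, toEuclideanLin_one', map_sub]
  rw [hyx] at hm
  have hrw : zbar - xhat
      = Matrix.toEuclideanLin ((1 : Matrix (Fin n) (Fin n) ℝ) - α • Kinv) (xbar - xhat) := by
    rw [hm, hzbar]
    abel
  rw [hrw]
  exact hcontr _
end

section
/- Let D be a real diagonal n×n matrix with strictly positive diagonal entries, let L be a real symmetric positive semidefinite n×n matrix such that every eigenvalue of the normalized matrix D^{-1/2} L D^{-1/2} is at most 2, let μ > 0, and set K = (D + (2/μ)L)⁻¹D and α = 2μ/(μ + 4). Then every element ν of the real spectrum of the matrix I − αK⁻¹ = I − α(I + (2/μ)D⁻¹L) satisfies |ν| ≤ 1. -/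
open Matrix

/-- In the generalized SSL setting with K = (D + (2/μ)L)⁻¹D and
α = 2μ/(μ+4), every real spectral value of I − αK⁻¹ = I − α(I + (2/μ)D⁻¹L)
has absolute value at most 1, provided the eigenvalues of the normalized
matrix D^{-1/2} L D^{-1/2} are at most 2. -/
theorem stmt_15 {n : ℕ} (d : Fin n → ℝ) (hd : ∀ i, 0 < d i)
    (L : Matrix (Fin n) (Fin n) ℝ) (hL : L.PosSemidef)
    (hnorm : ∀ ν ∈ spectrum ℝ
        ((Matrix.diagonal fun i => (Real.sqrt (d i))⁻¹) * L *
          (Matrix.diagonal fun i => (Real.sqrt (d i))⁻¹)), ν ≤ 2)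
    (μ : ℝ) (hμ : 0 < μ) (α : ℝ) (hα : α = 2 * μ / (μ + 4)) :
    ∀ ν ∈ spectrum ℝ ((1 : Matrix (Fin n) (Fin n) ℝ) -
        α • ((1 : Matrix (Fin n) (Fin n) ℝ) +
          (2 / μ) • ((Matrix.diagonal d)⁻¹ * L))),
      |ν| ≤ 1 := by
  classical
  set Sinv : Matrix (Fin n) (Fin n) ℝ := Matrix.diagonal fun i => (Real.sqrt (d i))⁻¹ with hSinv
  set S : Matrix (Fin n) (Fin n) ℝ := Matrix.diagonal fun i => Real.sqrt (d i) with hS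
  have hsqrt : ∀ i, Real.sqrt (d i) ≠ 0 := fun i =>
    ne_of_gt (Real.sqrt_pos.mpr (hd i))
  have hSS : S * Sinv = 1 := by
    rw [hS, hSinv, diagonal_mul_diagonal]
    rw [← Matrix.diagonal_one]
    simp [mul_inv_cancel₀, hsqrt]
  have hSS' : Sinv * S = 1 := by
    rw [hS, hSinv, diagonal_mul_diagonal]
    rw [← Matrix.diagonal_one]
    simp [inv_mul_cancel₀, hsqrt]
  set N : Matrix (Fin n) (Fin n) ℝ := Sinv * L * Sinv with hN
  -- N is PSD
  have hNps : N.PosSemidef := by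
    have : Sinvᴴ = Sinv := by
      simp [hSinv, conjTranspose, diagonal_transpose]
    have h2 := hL.mul_mul_conjTranspose_same Sinv
    rwa [this] at h2
  -- the inverse of diagonal d
  have hDinv : (Matrix.diagonal d)⁻¹ = Matrix.diagonal fun i => (d i)⁻¹ := by
    apply Matrix.inv_eq_right_inv
    rw [diagonal_mul_diagonal]
    simp [mul_inv_cancel₀, fun i => ne_of_gt (hd i)]
  -- key similarity identity
  have hkey : (Matrix.diagonal d)⁻¹ * L = Sinv * N * S := by
    rw [hDinv, hN]
    have : Sinv * (Sinv * L * Sinv) * S = (Sinv * Sinv) * L * (Sinv * S) := by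
      simp only [mul_assoc]
    rw [this, hSS', Matrix.mul_one, hSinv, diagonal_mul_diagonal,
      show (fun i => (Real.sqrt (d i))⁻¹ * (Real.sqrt (d i))⁻¹) = fun i => (d i)⁻¹ from
        funext fun i => by rw [← mul_inv, Real.mul_self_sqrt (hd i).le]]
  set M' : Matrix (Fin n) (Fin n) ℝ :=
    (1 : Matrix (Fin n) (Fin n) ℝ) - α • ((1 : Matrix (Fin n) (Fin n) ℝ) + (2 / μ) • N) with hM'
  have hconj : (1 : Matrix (Fin n) (Fin n) ℝ) -
      α • ((1 : Matrix (Fin n) (Fin n) ℝ) + (2 / μ) • ((Matrix.diagonal d)⁻¹ * L))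
      = Sinv * M' * S := by
    rw [hkey, hM']
    rw [Matrix.mul_sub, Matrix.sub_mul, Matrix.mul_one, hSS']
    congr 1
    rw [Matrix.mul_smul, Matrix.smul_mul]
    congr 1
    rw [Matrix.mul_add, Matrix.add_mul, Matrix.mul_one, hSS']
    congr 1
    rw [Matrix.mul_smul, Matrix.smul_mul, mul_assoc]
  intro ν hν
  rw [hconj] at hν
  -- move spectrum across conjugation
  have hα0 : 0 < α := by rw [hα]; positivity
  set u : (Matrix (Fin n) (Fin n) ℝ)ˣ := ⟨Sinv, S, hSS', hSS⟩ with hu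
  have hspec : spectrum ℝ (Sinv * M' * S) = spectrum ℝ M' := by
    have h9 : Sinv * M' * S = (u : Matrix (Fin n) (Fin n) ℝ) * M' *
        ((u⁻¹ : (Matrix (Fin n) (Fin n) ℝ)ˣ) : Matrix (Fin n) (Fin n) ℝ) := rfl
    rw [h9, spectrum.units_conjugate]
  rw [hspec] at hν
  -- rewrite M' as algebraMap (1-α) + c • N
  set c : ℝ := -(α * (2 / μ)) with hc
  have hc0 : c ≠ 0 := by
    rw [hc]
    have : α * (2 / μ) > 0 := by positivity
    linarith
  have hM'2 : M' = algebraMap ℝ (Matrix (Fin n) (Fin n) ℝ) (1 - α) + c • N := by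
    rw [hM', Algebra.algebraMap_eq_smul_one, hc]
    rw [smul_add, smul_smul, sub_smul, one_smul, neg_smul]
    abel
  rw [hM'2, ← spectrum.singleton_add_eq] at hν
  obtain ⟨r, hr, x, hx, hrx⟩ := Set.mem_add.mp hν
  rw [Set.mem_singleton_iff] at hr
  subst hr
  open scoped Pointwise in
  set cu : ℝˣ := Units.mk0 c hc0 with hcu
  have : spectrum ℝ (c • N) = c • spectrum ℝ N := by
    have := spectrum.unit_smul_eq_smul N cu
    simpa [hcu, Units.smul_def] using this
  rw [this] at hx
  obtain ⟨y, hy, rfl⟩ := hx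
  -- bounds on y
  have hy2 : y ≤ 2 := hnorm y hy
  have hy0 : 0 ≤ y := by
    rw [Matrix.IsHermitian.spectrum_real_eq_range_eigenvalues hNps.isHermitian] at hy
    obtain ⟨i, rfl⟩ := hy
    exact hNps.eigenvalues_nonneg i
  -- arithmetic
  subst hrx
  rw [abs_le]
  have hαval : α * (μ + 4) = 2 * μ := by
    rw [hα]; field_simp
  set β : ℝ := α * (2 / μ) with hβ
  have hβ0 : (0:ℝ) ≤ β := by rw [hβ]; positivity
  have hβμ : β * μ = 2 * α := by
    rw [hβ]; field_simp
  have hsum : α + 2 * β = 2 := by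
    have h1 : (α + 2 * β) * μ = 2 * μ := by linear_combination hαval + 2 * hβμ
    exact mul_right_cancel₀ (ne_of_gt hμ) h1
  have hβy : β * y ≤ β * 2 := mul_le_mul_of_nonneg_left hy2 hβ0
  have hβy0 : 0 ≤ β * y := mul_nonneg hβ0 hy0
  simp only [hc, smul_eq_mul]
  constructor
  · linarith
  · linarith
end
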